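/- Sign vector classifies path components: let d > 1, e = 1, and c ∈ ℝ^l, and let K = {k : c_k < 0}. For every θ = (W¹, W²) ∈ H(c) and every k ∈ K one has W²_{1k} ≠ 0, so the sign vector s(θ) = (sign(W²_{1k}))_{k∈K} ∈ {−1, +1}^K is well defined. Then two parameters θ, θ' ∈ H(c) lie in the same path component of H(c) (i.e., there is a continuous path inside H(c) from θ to θ') if and only if s(θ) = s(θ'). -/

import Mathlib

/-- The invariant set `H(c)` for scalar output (`e = 1`): parameters `(W¹, W²)`
with `W¹ : Fin l → Fin d → ℝ`, `W² : Fin 1 → Fin l → ℝ`, such that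
`∑ᵢ (W¹_{ki})² − (W²_{1k})² = c_k` for every hidden neuron `k`. -/
def invariantSet (l d : ℕ) (c : Fin l → ℝ) :
    Set ((Fin l → Fin d → ℝ) × (Fin 1 → Fin l → ℝ)) :=
  {θ | ∀ k, ∑ i, (θ.1 k i) ^ 2 - (θ.2 0 k) ^ 2 = c k}

noncomputable section

namespace SVC

/-- Per-neuron constraint set. -/
def Sset (d : ℕ) (c : ℝ) : Set ((Fin d → ℝ) × ℝ) :=
  {p | ∑ i, (p.1 i) ^ 2 - p.2 ^ 2 = c}

/-- Canonical point. -/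
def canon (d : ℕ) (c σ : ℝ) : (Fin d → ℝ) × ℝ :=
  (fun i => if (i : ℕ) = 0 then Real.sqrt (max c 0) else 0,
    σ * Real.sqrt (max (-c) 0))

lemma mkJoined {X : Type*} [TopologicalSpace X] {S : Set X} {a b : X}
    (f : ℝ → X) (hf : Continuous f) (h0 : f 0 = a) (h1 : f 1 = b)
    (hS : ∀ t ∈ Set.Icc (0:ℝ) 1, f t ∈ S) : JoinedIn S a b :=
  ⟨⟨⟨fun t => f t, hf.comp continuous_subtype_val⟩, h0, h1⟩,
    fun t => hS t ⟨t.2.1, t.2.2⟩⟩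

lemma sign_mul_abs' (y : ℝ) : Real.sign y * |y| = y := by
  rcases lt_trichotomy y 0 with h | h | h
  · rw [Real.sign_of_neg h, abs_of_neg h]; ring
  · simp [h]
  · rw [Real.sign_of_pos h, abs_of_pos h]; ring

lemma sign_mul_self {y : ℝ} (hy : y ≠ 0) : Real.sign y * Real.sign y = 1 := by
  rcases hy.lt_or_gt with h | h
  · rw [Real.sign_of_neg h]; norm_num
  · rw [Real.sign_of_pos h]; norm_num

lemma snd_ne_zero {d : ℕ} {c : ℝ} (hc : c < 0) {p : (Fin d → ℝ) × ℝ}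
    (hp : p ∈ Sset d c) : p.2 ≠ 0 := by
  intro h
  have h2 : (0:ℝ) ≤ ∑ i, (p.1 i) ^ 2 := Finset.sum_nonneg fun i _ => sq_nonneg _
  have := hp
  simp only [Sset, Set.mem_setOf_eq, h] at this
  nlinarith

lemma joinedIn_canon {d : ℕ} (hd : 1 < d) (c : ℝ) {p : (Fin d → ℝ) × ℝ}
    (hp : p ∈ Sset d c) : JoinedIn (Sset d c) p (canon d c (Real.sign p.2)) := by
  obtain ⟨x, y⟩ := p
  have hp' : ∑ i, (x i) ^ 2 - y ^ 2 = c := hp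
  have hsum0 : (0:ℝ) ≤ ∑ i, (x i) ^ 2 := Finset.sum_nonneg fun i _ => sq_nonneg _
  rcases lt_trichotomy c 0 with hc | hc | hc
  · -- c < 0
    have hy : y ≠ 0 := snd_ne_zero hc hp
    set σ := Real.sign y with hσdef
    have hσ : σ * σ = 1 := sign_mul_self hy
    apply mkJoined (fun t => ((fun i => (1 - t) * x i : Fin d → ℝ),
        σ * Real.sqrt (∑ i, ((1 - t) * x i) ^ 2 - c)))
    · fun_prop
    · refine Prod.ext (funext fun i => by ring) ?_
      show σ * Real.sqrt (∑ i, ((1 - (0:ℝ)) * x i) ^ 2 - c) = y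
      have h1 : ∑ i, ((1 - (0:ℝ)) * x i) ^ 2 - c = y ^ 2 := by
        have : ∑ i, ((1 - (0:ℝ)) * x i) ^ 2 = ∑ i, (x i) ^ 2 := by
          apply Finset.sum_congr rfl; intro i _; ring
        rw [this]; linarith
      rw [h1, Real.sqrt_sq_eq_abs]; exact sign_mul_abs' y
    · refine Prod.ext (funext fun i => ?_) ?_
      · show (1 - (1:ℝ)) * x i = _
        simp [canon, max_eq_right hc.le]
      · show σ * Real.sqrt (∑ i, ((1 - (1:ℝ)) * x i) ^ 2 - c) = _
        have : ∑ i, ((1 - (1:ℝ)) * x i) ^ 2 = 0 := by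
          apply Finset.sum_eq_zero; intro i _; ring
        simp [canon, this, max_eq_left (by linarith : (0:ℝ) ≤ -c)]
    · intro t _
      have hA : (0:ℝ) ≤ ∑ i, ((1 - t) * x i) ^ 2 - c := by
        have : (0:ℝ) ≤ ∑ i, ((1 - t) * x i) ^ 2 :=
          Finset.sum_nonneg fun i _ => sq_nonneg _
        linarith
      show (∑ i, ((1 - t) * x i) ^ 2) -
          (σ * Real.sqrt (∑ i, ((1 - t) * x i) ^ 2 - c)) ^ 2 = c
      rw [mul_pow, Real.sq_sqrt hA]
      have : σ ^ 2 = 1 := by rw [sq]; exact hσ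
      rw [this]; ring
  · -- c = 0
    subst hc
    apply mkJoined (fun t => ((fun i => (1 - t) * x i : Fin d → ℝ), (1 - t) * y))
    · fun_prop
    · exact Prod.ext (funext fun i => by ring) (by ring)
    · refine Prod.ext (funext fun i => ?_) ?_
      · show (1 - (1:ℝ)) * x i = _
        simp [canon]
      · show (1 - (1:ℝ)) * y = _
        simp [canon]
    · intro t _
      show (∑ i, ((1 - t) * x i) ^ 2) - ((1 - t) * y) ^ 2 = 0
      have h1 : ∑ i, ((1 - t) * x i) ^ 2 = (1 - t) ^ 2 * ∑ i, (x i) ^ 2 := by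
        rw [Finset.mul_sum]; apply Finset.sum_congr rfl; intro i _; ring
      rw [h1]; nlinarith [hp']
  · -- c > 0
    have hD : (0:ℝ) < c + y ^ 2 := by positivity
    have hsum : ∑ i, (x i) ^ 2 = c + y ^ 2 := by linarith
    -- stage 1
    have stage1 : JoinedIn (Sset d c) (x, y)
        ((fun i => Real.sqrt (c / (c + y ^ 2)) * x i : Fin d → ℝ), 0) := by
      apply mkJoined (fun t =>
        ((fun i => Real.sqrt ((c + ((1 - t) * y) ^ 2) / (c + y ^ 2)) * x i : Fin d → ℝ),
          (1 - t) * y))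
      · fun_prop
      · refine Prod.ext (funext fun i => ?_) (by ring)
        show Real.sqrt ((c + ((1 - (0:ℝ)) * y) ^ 2) / (c + y ^ 2)) * x i = x i
        have : (c + ((1 - (0:ℝ)) * y) ^ 2) / (c + y ^ 2) = 1 := by
          rw [div_eq_one_iff_eq hD.ne']; ring
        rw [this, Real.sqrt_one, one_mul]
      · refine Prod.ext (funext fun i => ?_) (by ring)
        show Real.sqrt ((c + ((1 - (1:ℝ)) * y) ^ 2) / (c + y ^ 2)) * x i = _
        norm_num
      · intro t _
        have hN : (0:ℝ) ≤ (c + ((1 - t) * y) ^ 2) / (c + y ^ 2) := by positivity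
        show (∑ i, (Real.sqrt ((c + ((1 - t) * y) ^ 2) / (c + y ^ 2)) * x i) ^ 2)
            - ((1 - t) * y) ^ 2 = c
        have h1 : ∑ i, (Real.sqrt ((c + ((1 - t) * y) ^ 2) / (c + y ^ 2)) * x i) ^ 2
            = ((c + ((1 - t) * y) ^ 2) / (c + y ^ 2)) * ∑ i, (x i) ^ 2 := by
          rw [Finset.mul_sum]
          apply Finset.sum_congr rfl; intro i _
          rw [mul_pow, Real.sq_sqrt hN]
        rw [h1, hsum, div_mul_cancel₀ _ hD.ne']
        ring
    -- stage 2 : on the sphere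
    have hrank : 1 < Module.rank ℝ (EuclideanSpace ℝ (Fin d)) := by
      have h1 : Module.rank ℝ (EuclideanSpace ℝ (Fin d)) = d := by
        rw [← Module.finrank_eq_rank, finrank_euclideanSpace_fin]
      rw [h1]; exact_mod_cast hd
    set u : Fin d → ℝ := fun i => Real.sqrt (c / (c + y ^ 2)) * x i with hu_def
    have hu : ∑ i, u i ^ 2 = c := by
      have h1 : ∑ i, u i ^ 2 = (c / (c + y ^ 2)) * ∑ i, (x i) ^ 2 := by
        rw [Finset.mul_sum]
        apply Finset.sum_congr rfl; intro i _
        rw [hu_def, mul_pow, Real.sq_sqrt (by positivity)]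
      rw [h1, hsum, div_mul_cancel₀ _ hD.ne']
    set v : Fin d → ℝ := (canon d c (Real.sign y)).1 with hv_def
    have hv : ∑ i, v i ^ 2 = c := by
      haveI : NeZero d := ⟨by omega⟩
      have h2 : ∀ i : Fin d, v i ^ 2 =
          if i = 0 then Real.sqrt (max c 0) ^ 2 else 0 := by
        intro i
        rw [hv_def]
        simp only [canon]
        by_cases h : i = 0
        · subst h; simp
        · have h' : (i : ℕ) ≠ 0 := by
            intro hh; exact h (Fin.ext (by simpa using hh))
          simp [h, h']
      rw [Finset.sum_congr rfl fun i _ => h2 i]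
      simp [max_eq_left hc.le, Real.sq_sqrt hc.le]
    have key : ∀ w : Fin d → ℝ, ∑ i, w i ^ 2 = c →
        (WithLp.equiv 2 (Fin d → ℝ)).symm w ∈
          Metric.sphere (0 : EuclideanSpace ℝ (Fin d)) (Real.sqrt c) := by
      intro w hw
      rw [mem_sphere_zero_iff_norm, EuclideanSpace.norm_eq]
      congr 1
      rw [← hw]
      apply Finset.sum_congr rfl; intro i _
      simp [Real.norm_eq_abs, sq_abs]
    have J := (isPathConnected_sphere hrank 0 (Real.sqrt_nonneg c)).joinedIn
      _ (key u hu) _ (key v hv)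
    have φcont : Continuous (fun z : EuclideanSpace ℝ (Fin d) =>
        (((WithLp.equiv 2 (Fin d → ℝ)) z, (0:ℝ)) : (Fin d → ℝ) × ℝ)) :=
      (PiLp.continuous_ofLp 2 (fun _ : Fin d => ℝ)).prodMk continuous_const
    obtain ⟨γ, hγ⟩ := J
    have stage2 : JoinedIn (Sset d c) (u, 0) (v, 0) := by
      refine ⟨(γ.map φcont).cast ?_ ?_, ?_⟩
      · simp
      · simp
      · intro t
        have hmem := hγ t
        rw [mem_sphere_zero_iff_norm] at hmem
        have hsq : ∑ i, ((γ t : EuclideanSpace ℝ (Fin d)) i) ^ 2 = c := by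
          have h3 := congrArg (· ^ 2) hmem
          simp only [EuclideanSpace.norm_eq] at h3
          rw [Real.sq_sqrt (Finset.sum_nonneg fun i _ => by positivity),
            Real.sq_sqrt hc.le] at h3
          rw [← h3]
          apply Finset.sum_congr rfl; intro i _
          simp [Real.norm_eq_abs, sq_abs]
        show (∑ i, _ ^ 2) - (0:ℝ) ^ 2 = c
        rw [show (0:ℝ) ^ 2 = 0 by norm_num, sub_zero]; exact hsq
    have hcanon : ((v, 0) : (Fin d → ℝ) × ℝ) = canon d c (Real.sign y) := by
      refine Prod.ext rfl ?_
      show (0:ℝ) = Real.sign y * Real.sqrt (max (-c) 0)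
      rw [max_eq_right (by linarith : -c ≤ 0), Real.sqrt_zero, mul_zero]
    rw [← hcanon]
    exact stage1.trans stage2
lemma sign_const {f : unitInterval → ℝ} (hf : Continuous f) (h : ∀ t, f t ≠ 0) :
    Real.sign (f 0) = Real.sign (f 1) := by
  rcases (h 0).lt_or_gt with h0 | h0 <;> rcases (h 1).lt_or_gt with h1 | h1
  · rw [Real.sign_of_neg h0, Real.sign_of_neg h1]
  · exfalso
    obtain ⟨t, ht⟩ := intermediate_value_univ 0 1 hf ⟨h0.le, h1.le⟩
    exact h t ht
  · exfalso
    obtain ⟨t, ht⟩ := intermediate_value_univ 1 0 hf ⟨h1.le, h0.le⟩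
    exact h t ht
  · rw [Real.sign_of_pos h0, Real.sign_of_pos h1]

end SVC


/-- For `d > 1`, `e = 1`: on `H(c)` every output weight `W²_{1k}`
with `c_k < 0` is nonzero, and two parameters `θ, θ' ∈ H(c)` are joined by a
continuous path inside `H(c)` iff their sign vectors
`s(θ) = (sign(W²_{1k}))_{k : c_k < 0}` coincide. -/
theorem sign_vector_classifies_path_components (l d : ℕ) (hd : 1 < d)
    (c : Fin l → ℝ) :
    (∀ θ ∈ invariantSet l d c, ∀ k, c k < 0 → θ.2 0 k ≠ 0) ∧
    (∀ θ ∈ invariantSet l d c, ∀ θ' ∈ invariantSet l d c,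
      (JoinedIn (invariantSet l d c) θ θ' ↔
        ∀ k, c k < 0 → Real.sign (θ.2 0 k) = Real.sign (θ'.2 0 k))) := by
  have part1 : ∀ θ ∈ invariantSet l d c, ∀ k, c k < 0 → θ.2 0 k ≠ 0 := by
    intro θ hθ k hk
    exact SVC.snd_ne_zero hk (show (θ.1 k, θ.2 0 k) ∈ SVC.Sset d (c k) from hθ k)
  refine ⟨part1, fun θ hθ θ' hθ' => ⟨?_, ?_⟩⟩
  · rintro ⟨γ, hγ⟩ k hk
    have hf : Continuous fun t : unitInterval => (γ t).2 0 k :=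
      (continuous_apply k).comp ((continuous_apply (0 : Fin 1)).comp
        (continuous_snd.comp γ.continuous))
    have hne : ∀ t, (γ t).2 0 k ≠ 0 := fun t => part1 _ (hγ t) k hk
    have h := SVC.sign_const hf hne
    rwa [show γ 0 = θ from γ.source, show γ 1 = θ' from γ.target] at h
  · intro hs
    have J : ∀ k, JoinedIn (SVC.Sset d (c k)) (θ.1 k, θ.2 0 k) (θ'.1 k, θ'.2 0 k) := by
      intro k
      have h1 := SVC.joinedIn_canon hd (c k)
        (show (θ.1 k, θ.2 0 k) ∈ SVC.Sset d (c k) from hθ k)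
      have h2 := SVC.joinedIn_canon hd (c k)
        (show (θ'.1 k, θ'.2 0 k) ∈ SVC.Sset d (c k) from hθ' k)
      have hcc : SVC.canon d (c k) (Real.sign (θ.2 0 k))
          = SVC.canon d (c k) (Real.sign (θ'.2 0 k)) := by
        by_cases hk : c k < 0
        · rw [hs k hk]
        · refine Prod.ext rfl ?_
          show _ * Real.sqrt (max (-(c k)) 0) = _ * Real.sqrt (max (-(c k)) 0)
          rw [max_eq_right (by linarith [not_lt.mp hk] : -(c k) ≤ 0)]
          simp
      rw [hcc] at h1
      exact h1.trans h2.symm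
    choose γ hγ using J
    refine ⟨⟨⟨fun t => (fun k => (γ k t).1, fun _ k => (γ k t).2), ?_⟩, ?_, ?_⟩, ?_⟩
    · exact (continuous_pi fun k => (γ k).continuous.fst).prodMk
        (continuous_pi fun _ => continuous_pi fun k => (γ k).continuous.snd)
    · refine Prod.ext (funext fun k => ?_) (funext fun j => funext fun k => ?_)
      · exact congrArg Prod.fst (γ k).source
      · rw [Subsingleton.elim j 0]
        exact congrArg Prod.snd (γ k).source
    · refine Prod.ext (funext fun k => ?_) (funext fun j => funext fun k => ?_)
      · exact congrArg Prod.fst (γ k).target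
      · rw [Subsingleton.elim j 0]
        exact congrArg Prod.snd (γ k).target
    · intro t k
      exact hγ k t
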